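/- For each j = 1, 2, ..., k, let G_j be a d_j-regular simple graph on n_j vertices with spectrum σ(G_j). Let G̃ be the graph obtained from the disjoint union of G₁, G₂, ..., G_k by connecting each vertex of G_j to every vertex of G_{j+1}, for j = 1, ..., k−1. Let Ĉ be the k×k symmetric tridiagonal matrix with diagonal entries d₁, ..., d_k and with (j, j+1) and (j+1, j) entries equal to √(n_j n_{j+1}). Then the energy of G̃ satisfies E(G̃) = Σ_{j=1}^{k} (E(G_j) − d_j) + E(Ĉ). -/

import Mathlib

open Matrix Polynomial SimpleGraph

/-- The energy of a real square matrix: the sum of the absolute values of its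
eigenvalues (roots of the characteristic polynomial), with multiplicity. -/
noncomputable def energy {ι : Type*} [Fintype ι] [DecidableEq ι]
    (M : Matrix ι ι ℝ) : ℝ :=
  (M.charpoly.roots.map fun x => |x|).sum

section aux

lemma eval_charpoly'' {ι : Type*} [Fintype ι] [DecidableEq ι] {R : Type*} [CommRing R]
    (M : Matrix ι ι R) (x : R) :
    M.charpoly.eval x = (x • (1 : Matrix ι ι R) - M).det := by
  rw [Matrix.charpoly, ← Polynomial.coe_evalRingHom, RingHom.map_det]
  congr 1
  ext i j
  by_cases h : i = j <;>
    simp [h, charmatrix_apply, Matrix.one_apply, Matrix.diagonal_apply]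

lemma my_det_blockDiagonal' {k : ℕ} {m : Fin k → Type*} [∀ i, Fintype (m i)]
    [∀ i, DecidableEq (m i)] {R : Type*} [CommRing R]
    (M : ∀ i, Matrix (m i) (m i) R) :
    (Matrix.blockDiagonal' M).det = ∏ i, (M i).det := by
  have key : ∀ i, ((blockDiagonal' M).toSquareBlock Sigma.fst i).det = (M i).det := by
    intro i
    let e : m i ≃ {x : Σ j, m j // x.1 = i} :=
      { toFun := fun a => ⟨⟨i, a⟩, rfl⟩
        invFun := fun x => x.2 ▸ x.1.2
        left_inv := fun a => rfl
        right_inv := by rintro ⟨⟨j, a⟩, rfl⟩; rfl }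
    have : ((blockDiagonal' M).toSquareBlock Sigma.fst i).submatrix e e = M i := by
      ext a b
      simp [Matrix.toSquareBlock_def, e, Matrix.submatrix_apply]
    rw [← Matrix.det_submatrix_equiv_self e, this]
  rw [(Matrix.blockTriangular_blockDiagonal' M).det]
  rw [Finset.prod_congr rfl (fun i _ => key i)]
  apply Finset.prod_subset (Finset.subset_univ _)
  intro i _ hi
  have : IsEmpty (m i) := ⟨fun a => hi (Finset.mem_image.mpr ⟨⟨i, a⟩, Finset.mem_univ _, rfl⟩)⟩
  exact Matrix.det_isEmpty

lemma my_charmatrix_blockDiagonal' {k : ℕ} {m : Fin k → Type*} [∀ i, Fintype (m i)]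
    [∀ i, DecidableEq (m i)] {R : Type*} [CommRing R]
    (M : ∀ i, Matrix (m i) (m i) R) :
    charmatrix (Matrix.blockDiagonal' M) = Matrix.blockDiagonal' fun i => charmatrix (M i) := by
  ext ⟨p, a⟩ ⟨q, b⟩
  by_cases h : p = q
  · subst h
    by_cases hab : a = b <;>
      simp [charmatrix_apply, Matrix.diagonal_apply, hab]
  · simp [Matrix.blockDiagonal'_apply_ne _ _ _ h, charmatrix_apply,
      Matrix.diagonal_apply, h, Sigma.ext_iff]

lemma my_charpoly_blockDiagonal' {k : ℕ} {m : Fin k → Type*} [∀ i, Fintype (m i)]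
    [∀ i, DecidableEq (m i)] {R : Type*} [CommRing R]
    (M : ∀ i, Matrix (m i) (m i) R) :
    (Matrix.blockDiagonal' M).charpoly = ∏ i, (M i).charpoly := by
  rw [Matrix.charpoly, my_charmatrix_blockDiagonal', my_det_blockDiagonal']
  rfl
end aux

/-- Energy of the sequential join of `k` regular graphs (each vertex of `G_j`
joined to each vertex of `G_{j+1}`). -/
theorem stmt_17 (k : ℕ) (n d : Fin k → ℕ)
    (G : ∀ j, SimpleGraph (Fin (n j + 1))) [∀ j, DecidableRel (G j).Adj]
    (hreg : ∀ j, (G j).IsRegularOfDegree (d j))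
    (Gtilde : SimpleGraph ((j : Fin k) × Fin (n j + 1))) [DecidableRel Gtilde.Adj]
    (hGtilde : ∀ x y : (j : Fin k) × Fin (n j + 1),
      Gtilde.Adj x y ↔
        ((∃ h : x.1 = y.1, (G y.1).Adj (Fin.cast (by rw [h]) x.2) y.2)
          ∨ x.1.val + 1 = y.1.val ∨ y.1.val + 1 = x.1.val))
    (Chat : Matrix (Fin k) (Fin k) ℝ)
    (hChat : ∀ p q : Fin k, Chat p q =
      if p = q then (d p : ℝ)
      else if p.val + 1 = q.val ∨ q.val + 1 = p.val then
        Real.sqrt ((n p + 1) * (n q + 1))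
      else 0) :
    energy (Gtilde.adjMatrix ℝ)
      = (∑ j, (energy ((G j).adjMatrix ℝ) - (d j : ℝ))) + energy Chat := by
  classical
  set w : Fin k → ℝ := fun p => (Real.sqrt ((n p : ℝ) + 1))⁻¹ with hw
  have hsq : ∀ p : Fin k, (0:ℝ) < Real.sqrt ((n p : ℝ) + 1) :=
    fun p => Real.sqrt_pos.mpr (by positivity)
  set A0 : Matrix ((j : Fin k) × Fin (n j + 1)) ((j : Fin k) × Fin (n j + 1)) ℝ := Matrix.blockDiagonal' (fun j => (G j).adjMatrix ℝ) with hA0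
  set U : Matrix ((j : Fin k) × Fin (n j + 1)) (Fin k) ℝ := Matrix.of (fun x p => if x.1 = p then w p else 0) with hU
  set Dm : Matrix (Fin k) (Fin k) ℝ := Matrix.diagonal (fun j => (d j : ℝ)) with hDm
  set C0 : Matrix (Fin k) (Fin k) ℝ := Chat - Dm with hC0
  -- entries of C0
  have hC0diag : ∀ p, C0 p p = 0 := by
    intro p; simp [hC0, hDm, Matrix.sub_apply, Matrix.diagonal_apply_eq, hChat p p]
  have hC0ne : ∀ p q, p ≠ q → C0 p q =
      if p.val + 1 = q.val ∨ q.val + 1 = p.val then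
        Real.sqrt (((n p : ℝ) + 1) * ((n q : ℝ) + 1)) else 0 := by
    intro p q hpq
    simp [hC0, hDm, Matrix.sub_apply, Matrix.diagonal_apply_ne _ hpq, hChat p q, hpq]
  -- entry formula for U * C0 * Uᵀ
  have hUCU : ∀ x y : (j : Fin k) × Fin (n j + 1), (U * C0 * Uᵀ) x y = w x.1 * C0 x.1 y.1 * w y.1 := by
    intro x y
    have h5 : ∀ s, (U * C0) x s = w x.1 * C0 x.1 s := by
      intro s
      rw [Matrix.mul_apply]
      have : ∀ r, U x r * C0 r s = if x.1 = r then w r * C0 r s else 0 := by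
        intro r; by_cases h : x.1 = r <;> simp [hU, h]
      rw [Finset.sum_congr rfl fun r _ => this r, Finset.sum_ite_eq]
      simp
    rw [Matrix.mul_apply]
    have : ∀ s, (U * C0) x s * Uᵀ s y = if y.1 = s then w x.1 * C0 x.1 s * w s else 0 := by
      intro s; rw [h5]; by_cases h : y.1 = s <;> simp [hU, Matrix.transpose_apply, h, mul_comm]
    rw [Finset.sum_congr rfl fun s _ => this s, Finset.sum_ite_eq]
    simp
  -- decomposition of adjacency matrix
  have h1 : Gtilde.adjMatrix ℝ = A0 + U * C0 * Uᵀ := by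
    ext x y
    rcases x with ⟨p, a⟩
    rcases y with ⟨q, b⟩
    rw [Matrix.add_apply, hUCU]
    by_cases hpq : p = q
    · subst hpq
      have hadj : Gtilde.Adj ⟨p, a⟩ ⟨p, b⟩ ↔ (G p).Adj a b := by
        rw [hGtilde]
        constructor
        · rintro (⟨h, hadj⟩ | h | h)
          · exact hadj
          · exact absurd h (Nat.succ_ne_self _)
          · exact absurd h (Nat.succ_ne_self _)
        · intro h
          exact Or.inl ⟨rfl, h⟩
      simp only [SimpleGraph.adjMatrix_apply, hadj, hA0,
        Matrix.blockDiagonal'_apply_eq, hC0diag]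
      simp
    · have hA0z : A0 ⟨p, a⟩ ⟨q, b⟩ = 0 := Matrix.blockDiagonal'_apply_ne _ _ _ hpq
      have hadj : Gtilde.Adj ⟨p, a⟩ ⟨q, b⟩ ↔ (p.val + 1 = q.val ∨ q.val + 1 = p.val) := by
        rw [hGtilde]
        simp only []
        constructor
        · rintro (⟨h, _⟩ | h | h)
          · exact absurd h hpq
          · exact Or.inl h
          · exact Or.inr h
        · intro h; exact Or.inr h
      rw [hA0z, zero_add, SimpleGraph.adjMatrix_apply, hC0ne p q hpq]
      by_cases hlev : p.val + 1 = q.val ∨ q.val + 1 = p.val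
      · rw [if_pos (hadj.mpr hlev), if_pos hlev]
        rw [Real.sqrt_mul (by positivity)]
        have h1 := (hsq p).ne'
        have h2 := (hsq q).ne'
        simp only [hw]
        field_simp
      · rw [if_neg (fun h => hlev (hadj.mp h)), if_neg hlev]
        simp
  -- UᵀU = 1
  have h2 : Uᵀ * U = 1 := by
    ext p q
    rw [Matrix.mul_apply]
    rw [← Finset.univ_sigma_univ, Finset.sum_sigma]
    have : ∀ j : Fin k, (∑ a : Fin (n j + 1), Uᵀ p ⟨j, a⟩ * U ⟨j, a⟩ q)
        = if j = p then (if p = q then ((n p : ℝ) + 1) * (w p * w q) else 0) else 0 := by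
      intro j
      by_cases h1' : j = p
      · subst h1'
        by_cases h2' : j = q
        · subst h2'
          simp only [hU, Matrix.transpose_apply, Matrix.of_apply, if_pos rfl,
            Finset.sum_const, Finset.card_univ, Fintype.card_fin, nsmul_eq_mul]
          push_cast
          ring
        · simp [hU, Matrix.transpose_apply, h2', Ne.symm h2']
      · simp [hU, Matrix.transpose_apply, h1', Ne.symm h1']
    rw [Finset.sum_congr rfl fun j _ => this j, Finset.sum_ite_eq']
    simp only [Finset.mem_univ, if_true]
    by_cases hpq : p = q
    · subst hpq
      rw [if_pos rfl, Matrix.one_apply_eq, hw]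
      have := (hsq p).ne'
      rw [← Real.mul_self_sqrt (show (0:ℝ) ≤ (n p : ℝ) + 1 by positivity)]
      field_simp
    · rw [if_neg hpq, Matrix.one_apply_ne hpq]
  -- A0 * U = U * Dm
  have h3 : A0 * U = U * Dm := by
    ext x p
    rcases x with ⟨j, a⟩
    rw [Matrix.mul_apply, Matrix.mul_diagonal]
    rw [← Finset.univ_sigma_univ, Finset.sum_sigma]
    have hrow : (∑ b : Fin (n j + 1), ((G j).adjMatrix ℝ) a b) = (d j : ℝ) := by
      simp only [SimpleGraph.adjMatrix_apply]
      rw [Finset.sum_boole]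
      rw [← SimpleGraph.neighborFinset_eq_filter, ← SimpleGraph.degree, hreg j a]
    have : ∀ q : Fin k, (∑ b : Fin (n q + 1), A0 ⟨j, a⟩ ⟨q, b⟩ * U ⟨q, b⟩ p)
        = if q = j then (if j = p then (d j : ℝ) * w p else 0) else 0 := by
      intro q
      by_cases hqj : q = j
      · subst hqj
        by_cases hjp : q = p
        · subst hjp
          simp only [hA0, Matrix.blockDiagonal'_apply_eq, hU, Matrix.of_apply, if_pos rfl,
            if_true]
          rw [← Finset.sum_mul, hrow]
        · simp [hA0, hU, hjp]
      · have : ∀ b, A0 ⟨j, a⟩ ⟨q, b⟩ = 0 :=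
          fun b => Matrix.blockDiagonal'_apply_ne _ _ _ (fun h => hqj h.symm)
        simp [this, hqj]
    rw [Finset.sum_congr rfl fun q _ => this q, Finset.sum_ite_eq']
    by_cases hjp : j = p <;> simp [hU, hjp, mul_comm]
  -- the polynomial identity
  set P : Polynomial ℝ := ∏ j, (X - C (d j : ℝ)) with hP
  set Q : Polynomial ℝ := ∏ j, ((G j).adjMatrix ℝ).charpoly with hQdef
  have hA0charpoly : A0.charpoly = Q := my_charpoly_blockDiagonal' _
  have hP0 : P ≠ 0 :=
    Finset.prod_ne_zero_iff.mpr fun j _ => X_sub_C_ne_zero _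
  have hQ0 : Q ≠ 0 :=
    Finset.prod_ne_zero_iff.mpr fun j _ => (Matrix.charpoly_monic _).ne_zero
  have hPeval : ∀ x : ℝ, P.eval x = (x • (1 : Matrix (Fin k) (Fin k) ℝ) - Dm).det := by
    intro x
    have hdiag : x • (1 : Matrix (Fin k) (Fin k) ℝ) - Dm
        = Matrix.diagonal (fun j => x - (d j : ℝ)) := by
      ext p q
      by_cases h : p = q <;> simp [h, Matrix.diagonal_apply, Matrix.one_apply, hDm]
    rw [hdiag, Matrix.det_diagonal, hP, eval_prod]
    simp
  have key : (Gtilde.adjMatrix ℝ).charpoly * P = Q * Chat.charpoly := by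
    apply Polynomial.eq_of_infinite_eval_eq
    have hinf : ({x : ℝ | (Q * P).IsRoot x}ᶜ).Infinite :=
      (Polynomial.finite_setOf_isRoot (mul_ne_zero hQ0 hP0)).infinite_compl
    apply hinf.mono
    intro x hx
    simp only [Set.mem_compl_iff, Set.mem_setOf_eq, Polynomial.IsRoot, eval_mul] at hx ⊢
    have hQx : Q.eval x ≠ 0 := fun h => hx (by rw [h, zero_mul])
    have hPx : P.eval x ≠ 0 := fun h => hx (by rw [h, mul_zero])
    set M := x • (1 : Matrix ((j : Fin k) × Fin (n j + 1)) ((j : Fin k) × Fin (n j + 1)) ℝ) - A0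
      with hM
    set E := x • (1 : Matrix (Fin k) (Fin k) ℝ) - Dm with hE
    have hQx' : Q.eval x = M.det := by rw [← hA0charpoly, eval_charpoly'', hM]
    have hPx' : P.eval x = E.det := by rw [hPeval, hE]
    have hMdet : IsUnit M.det := isUnit_iff_ne_zero.mpr (hQx' ▸ hQx)
    have hEdet : IsUnit E.det := isUnit_iff_ne_zero.mpr (hPx' ▸ hPx)
    have hME : M * U = U * E := by
      rw [hM, hE, Matrix.sub_mul, Matrix.mul_sub, Matrix.smul_mul, Matrix.mul_smul,
        Matrix.one_mul, Matrix.mul_one, h3]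
    have hMinvU : M⁻¹ * U = U * E⁻¹ := by
      calc M⁻¹ * U = M⁻¹ * U * (E * E⁻¹) := by
            rw [Matrix.mul_nonsing_inv _ hEdet, Matrix.mul_one]
        _ = M⁻¹ * (U * E) * E⁻¹ := by simp only [Matrix.mul_assoc]
        _ = M⁻¹ * (M * U) * E⁻¹ := by rw [hME]
        _ = U * E⁻¹ := by
            rw [← Matrix.mul_assoc, Matrix.nonsing_inv_mul _ hMdet, Matrix.one_mul]
    have e1 : ((Gtilde.adjMatrix ℝ).charpoly).eval x = M.det * (1 - E⁻¹ * C0).det := by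
      rw [eval_charpoly'', h1]
      have step : x • (1 : Matrix ((j : Fin k) × Fin (n j + 1)) ((j : Fin k) × Fin (n j + 1)) ℝ)
            - (A0 + U * C0 * Uᵀ)
          = M * (1 - M⁻¹ * (U * C0 * Uᵀ)) := by
        have h9 : M * M⁻¹ = 1 := Matrix.mul_nonsing_inv _ hMdet
        have h10 : M * (1 - M⁻¹ * (U * C0 * Uᵀ))
            = M - (M * M⁻¹) * (U * C0 * Uᵀ) := by noncomm_ring
        rw [h10, h9, one_mul, hM, sub_sub]
      rw [step, Matrix.det_mul]
      congr 1
      have assoc : M⁻¹ * (U * C0 * Uᵀ) = (M⁻¹ * U * C0) * Uᵀ := by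
        simp only [Matrix.mul_assoc]
      rw [assoc, Matrix.det_one_sub_mul_comm]
      congr 2
      calc Uᵀ * (M⁻¹ * U * C0) = Uᵀ * (M⁻¹ * U) * C0 := by simp only [Matrix.mul_assoc]
        _ = Uᵀ * (U * E⁻¹) * C0 := by rw [hMinvU]
        _ = (Uᵀ * U) * E⁻¹ * C0 := by simp only [Matrix.mul_assoc]
        _ = E⁻¹ * C0 := by rw [h2, Matrix.one_mul]
    have e2 : E.det * (1 - E⁻¹ * C0).det = (Chat.charpoly).eval x := by
      rw [← Matrix.det_mul, eval_charpoly'']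
      congr 1
      rw [Matrix.mul_sub, Matrix.mul_one, ← Matrix.mul_assoc,
        Matrix.mul_nonsing_inv _ hEdet, Matrix.one_mul, hE, hC0]
      abel
    rw [e1, hPx', hQx', ← e2]
    ring
  -- extract the root multisets
  have hroots := congrArg Polynomial.roots key
  rw [Polynomial.roots_mul (mul_ne_zero (Matrix.charpoly_monic _).ne_zero hP0),
    Polynomial.roots_mul (mul_ne_zero hQ0 (Matrix.charpoly_monic _).ne_zero)] at hroots
  have hProots : P.roots = Finset.univ.val.map (fun j => (d j : ℝ)) := by
    have : P = ((Finset.univ.val.map fun j => (d j : ℝ)).map (fun a => X - C a)).prod := by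
      rw [Multiset.map_map, hP, Finset.prod_eq_multiset_prod]
      rfl
    rw [this, roots_multiset_prod_X_sub_C]
  have hQroots : Q.roots
      = Finset.univ.val.bind (fun j => (((G j).adjMatrix ℝ).charpoly).roots) :=
    Polynomial.roots_prod _ _ hQ0
  rw [hProots, hQroots] at hroots
  have habs := congrArg (fun s : Multiset ℝ => (s.map fun x => |x|).sum) hroots
  simp only [Multiset.map_add, Multiset.sum_add, Multiset.map_map, Multiset.map_bind,
    Multiset.sum_bind, Function.comp] at habs
  have key2 : (Gtilde.adjMatrix ℝ).charpoly.roots.map (fun x => |x|)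
      + ((Finset.univ.val.map fun j => (d j : ℝ)).map (fun x => |x|))
      = ((Finset.univ.val.bind fun j =>
            (((G j).adjMatrix ℝ).charpoly).roots).map (fun x => |x|))
        + Chat.charpoly.roots.map (fun x => |x|) := by
    rw [← Multiset.map_add, ← Multiset.map_add, hroots]
  have key3 := congrArg Multiset.sum key2
  rw [Multiset.sum_add, Multiset.sum_add, Multiset.map_map, Multiset.map_bind,
    Multiset.sum_bind] at key3
  have e3 : (Finset.univ.val.map ((fun x : ℝ => |x|) ∘ fun j => (d j : ℝ)))
      = Finset.univ.val.map (fun j => (d j : ℝ)) :=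
    Multiset.map_congr rfl (fun j _ => abs_of_nonneg (Nat.cast_nonneg _))
  rw [e3] at key3
  have e4 : ((Finset.univ.val.map fun j => (d j : ℝ))).sum = ∑ j, (d j : ℝ) := rfl
  rw [e4] at key3
  have e5 : ((Finset.univ.val.map
        (fun j => ((((G j).adjMatrix ℝ).charpoly).roots.map fun x => |x|).sum))).sum
      = ∑ j, energy ((G j).adjMatrix ℝ) := rfl
  rw [e5] at key3
  unfold energy
  rw [Finset.sum_sub_distrib]
  unfold energy at key3
  linarith
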